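/- Consider a birth-death process on X = ℕ₀ with rates k(x,x+1) = a(x), k(x,x−1) = b(x) (b(0) = 0, b(x) > 0 for x ≥ 1, a(x) > 0 for all x) and k(x,y) = 0 for |x−y| > 1, x ≠ y. Assume the rates are monotone, a(x+1) ≤ a(x) and b(x+1) ≥ b(x) for all x ∈ ℕ₀, and that a(x) − a(x+1) + b(x+1) − b(x) ≥ κ for all x ∈ ℕ₀ and some κ > 0. Then there exists no n ∈ [1,∞) such that Ψ_{2,Υ}(f)(x) ≥ (1/n)·(L f(x))² holds for all bounded f : ℕ₀ → ℝ and all x ∈ ℕ₀ with −L f(x) > 0. In particular, L satisfies CD_Υ(0,n) for no n ∈ [1,∞). -/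
import Mathlib


open Real Filter MeasureTheory Set

/-- `Υ(r) = e^r - r - 1`. -/
noncomputable def Ups (r : ℝ) : ℝ := Real.exp r - r - 1

/-- Boundedness of a real-valued function on the state space. -/
def BddFun {X : Type*} (f : X → ℝ) : Prop := ∃ B : ℝ, ∀ x, |f x| ≤ B

/-- The birth-death generator on `ℕ₀`:
`L f(x) = a(x)(f(x+1)-f(x)) + b(x)(f(x-1)-f(x))` (with `b(0) = 0`). -/
noncomputable def genBD (a b : ℕ → ℝ) (f : ℕ → ℝ) (x : ℕ) : ℝ :=
  a x * (f (x + 1) - f x) + b x * (f (x - 1) - f x)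

/-- `Ψ_Υ(f)(x) = a(x) Υ(f(x+1)-f(x)) + b(x) Υ(f(x-1)-f(x))`. -/
noncomputable def psiUpsBD (a b : ℕ → ℝ) (f : ℕ → ℝ) (x : ℕ) : ℝ :=
  a x * Ups (f (x + 1) - f x) + b x * Ups (f (x - 1) - f x)

/-- `B_{Υ'}(f,g)(x)` for the birth-death generator. -/
noncomputable def bUpsBD (a b : ℕ → ℝ) (f g : ℕ → ℝ) (x : ℕ) : ℝ :=
  a x * (Real.exp (f (x + 1) - f x) - 1) * (g (x + 1) - g x) +
    b x * (Real.exp (f (x - 1) - f x) - 1) * (g (x - 1) - g x)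

/-- `Ψ_{2,Υ}(f) = (1/2)(L Ψ_Υ(f) - B_{Υ'}(f,Lf))` for the birth-death generator. -/
noncomputable def psi2UpsBD (a b : ℕ → ℝ) (f : ℕ → ℝ) (x : ℕ) : ℝ :=
  (1/2) * (genBD a b (psiUpsBD a b f) x - bUpsBD a b f (genBD a b f) x)

private lemma stmt15_tele (a b : ℕ → ℝ) (hb0 : b 0 = 0) (κ : ℝ)
    (hgap : ∀ x : ℕ, κ ≤ a x - a (x + 1) + b (x + 1) - b x) :
    ∀ x : ℕ, κ * x ≤ a 0 - a x + b x := by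
  intro x
  induction x with
  | zero => simp [hb0]
  | succ k ih =>
    have h := hgap k
    push_cast
    nlinarith [ih]

private lemma stmt15_a_le (a : ℕ → ℝ) (hamono : ∀ x : ℕ, a (x + 1) ≤ a x) : ∀ k : ℕ, a k ≤ a 0 := by
  intro k
  induction k with
  | zero => exact le_refl _
  | succ k ih => exact (hamono k).trans ih

set_option maxHeartbeats 1000000 in
private lemma stmt15_key (a b : ℕ → ℝ) (hb0 : b 0 = 0) (hapos : ∀ x : ℕ, 0 < a x)
    (hamono : ∀ x : ℕ, a (x + 1) ≤ a x) (κ : ℝ) (hκ : 0 < κ)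
    (hgap : ∀ x : ℕ, κ ≤ a x - a (x + 1) + b (x + 1) - b x)
    (n : ℝ) (hn : 1 ≤ n) :
    ∃ (f : ℕ → ℝ) (x : ℕ), BddFun f ∧ 0 < -genBD a b f x ∧
      max (-genBD a b f x) 0 = -genBD a b f x ∧
      psi2UpsBD a b f x < 1 / n * genBD a b f x ^ 2 := by
  set s := Real.sqrt n with hsdef
  have hn0 : (0:ℝ) < n := by linarith
  have hs1 : 1 ≤ s := by
    rw [hsdef, show (1:ℝ) = Real.sqrt 1 by simp]
    exact Real.sqrt_le_sqrt hn
  have hs2 : s ^ 2 = n := Real.sq_sqrt (by linarith)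
  obtain ⟨m, hm⟩ := exists_nat_gt (a 0 * (1 + Real.exp s) / κ)
  have hmκ : a 0 * (1 + Real.exp s) < κ * m := by
    rw [div_lt_iff₀ hκ] at hm
    linarith [hm]
  have htele := stmt15_tele a b hb0 κ hgap (m + 2)
  have ham2 := hapos (m + 2)
  have hb2 : a 0 * Real.exp s < b (m + 2) := by
    have : κ * m ≤ κ * ((m:ℝ) + 2) := by nlinarith
    push_cast at htele
    have ha0 := hapos 0
    nlinarith
  have hb2pos : 0 < b (m + 2) := by
    have := Real.exp_pos s
    nlinarith [hapos 0]
  set f : ℕ → ℝ := fun y => if y < m + 2 then -s else 0 with hfdef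
  have hf0 : f m = -s := by simp [hfdef]
  have hf1 : f (m+1) = -s := by simp [hfdef]
  have hf2 : f (m+2) = 0 := by simp [hfdef]
  have hf3 : f (m+3) = 0 := by simp [hfdef]
  have hf4 : f (m+4) = 0 := by simp [hfdef]
  have hL : genBD a b f (m+2) = -(b (m+2) * s) := by
    show a (m+2) * (f (m+3) - f (m+2)) + b (m+2) * (f (m+1) - f (m+2)) = _
    rw [hf1, hf2, hf3]; ring
  have hLpos : 0 < -genBD a b f (m+2) := by
    rw [hL, neg_neg]; positivity
  refine ⟨f, m + 2, ⟨s, ?_⟩, hLpos, max_eq_left hLpos.le, ?_⟩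
  · intro y
    by_cases h : y < m + 2
    · simp only [hfdef, if_pos h]
      rw [abs_neg, abs_of_nonneg (by linarith)]
    · simp only [hfdef, if_neg h, abs_zero]
      linarith
  · have hRHS : 1 / n * genBD a b f (m+2) ^ 2 = b (m+2) ^ 2 := by
      rw [hL]
      field_simp
      nlinarith [hs2]
    rw [hRHS]
    have hL1 : genBD a b f (m+1) = a (m+1) * s := by
      show a (m+1) * (f (m+2) - f (m+1)) + b (m+1) * (f m - f (m+1)) = _
      rw [hf0, hf1, hf2]; ring
    have hL3 : genBD a b f (m+3) = 0 := by
      show a (m+3) * (f (m+4) - f (m+3)) + b (m+3) * (f (m+2) - f (m+3)) = _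
      rw [hf2, hf3, hf4]; ring
    have hP1 : psiUpsBD a b f (m+1) = a (m+1) * Ups s + b (m+1) * Ups 0 := by
      show a (m+1) * Ups (f (m+2) - f (m+1)) + b (m+1) * Ups (f m - f (m+1)) = _
      rw [hf0, hf1, hf2]; norm_num
    have hP2 : psiUpsBD a b f (m+2) = b (m+2) * Ups (-s) := by
      show a (m+2) * Ups (f (m+3) - f (m+2)) + b (m+2) * Ups (f (m+1) - f (m+2)) = _
      rw [hf1, hf2, hf3]; simp [Ups]
    have hP3 : psiUpsBD a b f (m+3) = 0 := by
      show a (m+3) * Ups (f (m+4) - f (m+3)) + b (m+3) * Ups (f (m+2) - f (m+3)) = _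
      rw [hf2, hf3, hf4]; simp [Ups]
    have hpsi2 : psi2UpsBD a b f (m+2) =
        (1/2) * (a (m+2) * (0 - b (m+2) * Ups (-s))
          + b (m+2) * ((a (m+1) * Ups s + b (m+1) * Ups 0) - b (m+2) * Ups (-s))
          - (a (m+2) * (Real.exp (f (m+3) - f (m+2)) - 1) * (0 - -(b (m+2) * s))
            + b (m+2) * (Real.exp (f (m+1) - f (m+2)) - 1)
              * (a (m+1) * s - -(b (m+2) * s)))) := by
      show (1/2) * (a (m+2) * (psiUpsBD a b f (m+3) - psiUpsBD a b f (m+2))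
          + b (m+2) * (psiUpsBD a b f (m+1) - psiUpsBD a b f (m+2))
          - (a (m+2) * (Real.exp (f (m+3) - f (m+2)) - 1)
              * (genBD a b f (m+3) - genBD a b f (m+2))
            + b (m+2) * (Real.exp (f (m+1) - f (m+2)) - 1)
              * (genBD a b f (m+1) - genBD a b f (m+2)))) = _
      rw [hP1, hP2, hP3, hL, hL1, hL3]
    rw [hpsi2, hf1, hf2, hf3]
    clear hpsi2 hP1 hP2 hP3 hL hL1 hL3 hLpos hf0 hf1 hf2 hf3 hf4 hRHS
    clear_value f
    clear hfdef f
    have hE0 : 0 < Real.exp (-s) := Real.exp_pos _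
    have hY : 1 - s ≤ Real.exp (-s) := by linarith [Real.add_one_le_exp (-s)]
    have hX0 : 0 < Real.exp s := Real.exp_pos _
    have ha1 : 0 < a (m+1) := hapos (m+1)
    have ha10 : a (m+1) ≤ a 0 := stmt15_a_le a hamono (m+1)
    have e1 : Real.exp ((0:ℝ) - 0) = 1 := by norm_num
    have e2 : Real.exp (-s - 0) = Real.exp (-s) := by rw [sub_zero]
    have e3 : Ups 0 = 0 := by simp [Ups]
    have e4 : Ups (-s) = Real.exp (-s) + s - 1 := by rw [Ups]; ring
    have e5 : Ups s = Real.exp s - s - 1 := rfl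
    rw [e1, e2, e3, e4, e5]
    set A : ℝ := a (m+1)
    set A2 : ℝ := a (m+2)
    set B : ℝ := b (m+2)
    set E : ℝ := Real.exp (-s)
    set X : ℝ := Real.exp s
    have hsp : (0:ℝ) < s := lt_of_lt_of_le one_pos hs1
    have key : -(A2*B)*(E+s-1) + A*B*(X-1-s*E) + B^2*(1-E-s*E) < 2*B^2 := by
      have h1 : A*(X-1-s*E) < A*X := by nlinarith [mul_pos ha1 (mul_pos hsp hE0)]
      have h2 : A*X ≤ a 0 * X := by nlinarith [mul_le_mul_of_nonneg_right ha10 hX0.le]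
      have h3 : A*B*(X-1-s*E) < B*B := by
        have hAB : A*(X-1-s*E) < B := by linarith
        calc A*B*(X-1-s*E) = B*(A*(X-1-s*E)) := by ring
          _ < B*B := by exact mul_lt_mul_of_pos_left hAB hb2pos
      have h4 : -(A2*B)*(E+s-1) ≤ 0 := by nlinarith [mul_nonneg (mul_pos ham2 hb2pos).le (by linarith : (0:ℝ) ≤ E+s-1)]
      have h5 : B^2*(1-E-s*E) ≤ B^2 := by nlinarith [mul_nonneg (sq_nonneg B) (by nlinarith [mul_pos hsp hE0] : (0:ℝ) ≤ E+s*E)]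
      nlinarith [h3, h4, h5]
    have hrearr : (1/2) * (A2 * (0 - B * (E + s - 1))
          + B * ((A * (X - s - 1) + b (m+1) * 0) - B * (E + s - 1))
          - (A2 * (1 - 1) * (0 - -(B * s)) + B * (E - 1) * (A * s - -(B * s))))
        = (1/2) * (-(A2*B)*(E+s-1) + A*B*(X-1-s*E) + B^2*(1-E-s*E)) := by ring
    rw [hrearr]
    linarith [key]


/-- Example 2.10: a birth-death process with monotone rates and uniform positive
curvature gap satisfies no finite-dimensional condition `CD_Υ(0,n)` — not even with
the dimension term required only at points where `-Lf(x) > 0`. -/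
theorem stmt_15 (a b : ℕ → ℝ) (hb0 : b 0 = 0) (hbpos : ∀ x : ℕ, 1 ≤ x → 0 < b x)
    (hapos : ∀ x : ℕ, 0 < a x)
    (hamono : ∀ x : ℕ, a (x + 1) ≤ a x) (hbmono : ∀ x : ℕ, b x ≤ b (x + 1))
    (κ : ℝ) (hκ : 0 < κ)
    (hgap : ∀ x : ℕ, κ ≤ a x - a (x + 1) + b (x + 1) - b x) :
    (¬ ∃ n : ℝ, 1 ≤ n ∧ ∀ f : ℕ → ℝ, BddFun f → ∀ x : ℕ,
        0 < -genBD a b f x → 1 / n * genBD a b f x ^ 2 ≤ psi2UpsBD a b f x)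
    ∧ (¬ ∃ n : ℝ, 1 ≤ n ∧ ∀ f : ℕ → ℝ, BddFun f → ∀ x : ℕ,
        1 / n * max (-genBD a b f x) 0 ^ 2 ≤ psi2UpsBD a b f x) := by
  constructor
  · rintro ⟨n, hn, h⟩
    obtain ⟨f, x, hbdd, hpos, hmax, hlt⟩ := stmt15_key a b hb0 hapos hamono κ hκ hgap n hn
    exact absurd (h f hbdd x hpos) (not_le.mpr hlt)
  · rintro ⟨n, hn, h⟩
    obtain ⟨f, x, hbdd, hpos, hmax, hlt⟩ := stmt15_key a b hb0 hapos hamono κ hκ hgap n hn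
    have := h f hbdd x
    rw [hmax, neg_pow] at this
    have h2 : 1 / n * genBD a b f x ^ 2 ≤ psi2UpsBD a b f x := by
      rw [div_eq_mul_inv]; nlinarith [this]
    exact absurd h2 (not_le.mpr hlt)
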